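/- Let w be a nonempty string over a finite alphabet Σ, let q and p be integers with q > |w| and p ≥ 1, let P be a string over Σ with |P| = q, and let t = w·pre(w^{p−1}, q−1). Then for every i ∈ Occ(w^p, P), the position j = ((i−1) mod |w|) + 1 satisfies j ∈ Occ(t, P), and i = j + m·|w| for some integer m ≥ 0. -/

import Mathlib

/-- `Occ T P` is the set of (1-based) occurrence positions of `P` in `T`:
`{ i : 1 ≤ i ≤ |T|−|P|+1 and T[i:i+|P|−1] = P }`. -/
def Occ {α : Type*} [DecidableEq α] (T P : List α) : Finset ℕ :=
  (Finset.Icc 1 (T.length - P.length + 1)).filter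
    (fun i => (T.drop (i - 1)).take P.length = P)

/-- `pre T k = T[1:min(k,|T|)]`, the prefix of `T` of length at most `k`. -/
def pre {α : Type*} (T : List α) (k : ℕ) : List α := T.take k

/-- `suf T k = T[|T|−min(k,|T|)+1:|T|]`, the suffix of `T` of length at most `k`. -/
def suf {α : Type*} (T : List α) (k : ℕ) : List α := T.drop (T.length - k)

/-- `listPow w p` is the `p`-fold concatenation `w^p`. -/
def listPow {α : Type*} (w : List α) : ℕ → List α
  | 0 => []
  | p + 1 => w ++ listPow w p

lemma listPow_length {α : Type*} (w : List α) (n : ℕ) :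
    (listPow w n).length = n * w.length := by
  induction n with
  | zero => simp [listPow]
  | succ n ih => simp [listPow, ih, Nat.succ_mul]; omega

lemma listPow_succ' {α : Type*} (w : List α) (n : ℕ) :
    listPow w (n + 1) = listPow w n ++ w := by
  induction n with
  | zero => simp [listPow]
  | succ n ih =>
    show w ++ listPow w (n + 1) = (w ++ listPow w n) ++ w
    rw [List.append_assoc, ← ih]

lemma take_drop_prefix {α : Type*} {l₁ l₂ : List α} (h : l₁ <+: l₂) (y k : ℕ)
    (hk : y + k ≤ l₁.length) :
    (l₂.drop y).take k = (l₁.drop y).take k := by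
  obtain ⟨r, rfl⟩ := h
  rw [List.drop_append_of_le_length (by omega),
    List.take_append_of_le_length (by rw [List.length_drop]; omega)]

lemma drop_shift {α : Type*} (w : List α) (n y k : ℕ) (h : y + k ≤ n * w.length) :
    ((listPow w (n + 1)).drop (w.length + y)).take k
      = ((listPow w (n + 1)).drop y).take k := by
  have h1 : ((listPow w (n + 1)).drop (w.length + y)).take k
      = ((listPow w n).drop y).take k := by
    show (((w ++ listPow w n)).drop (w.length + y)).take k = _
    rw [List.drop_append, List.drop_eq_nil_of_le (by omega)]; simp
  rw [h1, listPow_succ']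
  exact (take_drop_prefix ⟨w, rfl⟩ y k (by rw [listPow_length]; omega)).symm

lemma take_drop_mod {α : Type*} (w : List α) (p y m k : ℕ)
    (h : y + m * w.length + k ≤ p * w.length) :
    ((listPow w p).drop (y + m * w.length)).take k = ((listPow w p).drop y).take k := by
  induction m with
  | zero => simp
  | succ m ih =>
    by_cases hL : w.length = 0
    · simp [hL]
    · have hsm : (m + 1) * w.length = m * w.length + w.length := by rw [Nat.succ_mul]
      have hp : p ≠ 0 := by
        rintro rfl; omega
      obtain ⟨n, rfl⟩ : ∃ n, p = n + 1 := ⟨p - 1, by omega⟩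
      have hnm : (n + 1) * w.length = n * w.length + w.length := by rw [Nat.succ_mul]
      have h2 : y + (m + 1) * w.length = w.length + (y + m * w.length) := by omega
      rw [h2, drop_shift w n (y + m * w.length) k (by omega)]
      exact ih (by omega)

/-- for `q > |w|`, `p ≥ 1` and `t = w·pre(w^{p−1}, q−1)`, every occurrence
`i ∈ Occ(w^p,P)` reduces, via `j = ((i−1) mod |w|) + 1`, to an occurrence `j ∈ Occ(t,P)`,
and `i = j + m·|w|` for some `m ≥ 0`. -/
theorem pow_occurrence_reduces_to_t {α : Type*} [Fintype α] [DecidableEq α]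
    (w : List α) (hw : w ≠ []) (q p : ℕ) (hq : w.length < q) (hp : 1 ≤ p)
    (P : List α) (hP : P.length = q) :
    ∀ i ∈ Occ (listPow w p) P,
      ((i - 1) % w.length + 1) ∈ Occ (w ++ pre (listPow w (p - 1)) (q - 1)) P ∧
        ∃ m : ℕ, i = ((i - 1) % w.length + 1) + m * w.length := by
  intro i hi
  have hL1 : 1 ≤ w.length := List.length_pos_iff.mpr hw
  obtain ⟨n, rfl⟩ : ∃ n, p = n + 1 := ⟨p - 1, by omega⟩
  rw [Occ, Finset.mem_filter, Finset.mem_Icc] at hi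
  obtain ⟨⟨hi1, _⟩, hT⟩ := hi
  -- the occurrence really fits
  have hlen : (((listPow w (n+1)).drop (i - 1)).take P.length).length = P.length :=
    congrArg List.length hT
  rw [List.length_take, List.length_drop, listPow_length, hP] at hlen
  have hR : q ≤ (n + 1) * w.length - (i - 1) := by
    have := Nat.min_le_right q ((n + 1) * w.length - (i - 1))
    omega
  have hnm : (n + 1) * w.length = n * w.length + w.length := by rw [Nat.succ_mul]
  have hiq : i - 1 + q ≤ (n + 1) * w.length := by omega
  set j := (i - 1) % w.length + 1 with hj
  set m := (i - 1) / w.length with hm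
  have hdm := Nat.mod_add_div' (i - 1) w.length
  rw [← hm] at hdm
  have hmod : (i - 1) % w.length < w.length := Nat.mod_lt _ (by omega)
  have him : i - 1 = (j - 1) + m * w.length := by omega
  refine ⟨?_, m, by omega⟩
  have hnp : n + 1 - 1 = n := rfl
  rw [hnp]
  set t := w ++ pre (listPow w n) (q - 1) with ht
  have htlen : t.length = w.length + min (q - 1) (n * w.length) := by
    simp [ht, pre, listPow_length, Nat.min_comm]
  have htpre : t <+: listPow w (n + 1) := by
    refine ⟨(listPow w n).drop (q - 1), ?_⟩
    show (w ++ (listPow w n).take (q - 1)) ++ _ = w ++ listPow w n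
    rw [List.append_assoc, List.take_append_drop]
  have hmin1 : min (q - 1) (n * w.length) ≤ q - 1 := Nat.min_le_left _ _
  have hmin2 : min (q - 1) (n * w.length) ≤ n * w.length := Nat.min_le_right _ _
  have hmin3 : min (q - 1) (n * w.length) = q - 1 ∨
      min (q - 1) (n * w.length) = n * w.length := by
    rcases Nat.le_total (q - 1) (n * w.length) with h | h
    · exact Or.inl (Nat.min_eq_left h)
    · exact Or.inr (Nat.min_eq_right h)
  have hjq : j - 1 + q ≤ t.length := by omega
  rw [Occ, Finset.mem_filter, Finset.mem_Icc]
  refine ⟨⟨by omega, by omega⟩, ?_⟩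
  rw [hP] at hT ⊢
  calc (t.drop (j - 1)).take q
      = ((listPow w (n+1)).drop (j - 1)).take q :=
        (take_drop_prefix htpre (j - 1) q hjq).symm
    _ = ((listPow w (n+1)).drop (i - 1)).take q := by
        rw [him]; exact (take_drop_mod w (n+1) (j-1) m q (by omega)).symm
    _ = P := hT
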